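/- For all natural numbers n and positive integers k, Ch_n^{(k)} = ∑_{ℓ=0}^{n} s₁(n,ℓ) · E_ℓ^{(k)}, where s₁ are the signed Stirling numbers of the first kind and E_ℓ^{(k)} are the order-k Euler numbers. -/
import Mathlib


open Finset

/-- Signed Stirling numbers of the first kind. -/
def s1 : ℕ → ℕ → ℚ
  | 0, 0 => 1
  | 0, _ + 1 => 0
  | n + 1, 0 => -(n : ℚ) * s1 n 0
  | n + 1, l + 1 => s1 n l - (n : ℚ) * s1 n (l + 1)

/-- Stirling numbers of the second kind. -/
def S2 : ℕ → ℕ → ℚ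
  | 0, 0 => 1
  | 0, _ + 1 => 0
  | _ + 1, 0 => 0
  | n + 1, l + 1 => S2 n l + ((l : ℚ) + 1) * S2 n (l + 1)

/-- Order-k Euler numbers. -/
def E (k l : ℕ) : ℚ :=
  ∑ j ∈ range (l + 1), (-1/2 : ℚ)^j * ((k + j - 1).choose j) * (j.factorial : ℚ) * S2 l j

/-- Higher-order Changhee numbers of the first kind. -/
def Ch (k n : ℕ) : ℚ := (-1)^n * n.factorial / 2^n * ((k + n - 1).choose n)

lemma S2_zero (n : ℕ) : ∀ m, n < m → S2 n m = 0 := by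
  induction n with
  | zero => intro m hm; match m, hm with | m + 1, _ => rfl
  | succ n ih =>
    intro m hm
    match m, hm with
    | m + 1, hm =>
      have h1 : n < m := Nat.lt_of_succ_lt_succ hm
      rw [show S2 (n+1) (m+1) = S2 n m + ((m : ℚ) + 1) * S2 n (m+1) from rfl,
        ih m h1, ih (m+1) (Nat.lt_succ_of_lt h1)]
      ring

lemma s1_zero (n : ℕ) : ∀ m, n < m → s1 n m = 0 := by
  induction n with
  | zero => intro m hm; match m, hm with | m + 1, _ => rfl
  | succ n ih =>
    intro m hm
    match m, hm with
    | m + 1, hm =>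
      have h1 : n < m := Nat.lt_of_succ_lt_succ hm
      rw [show s1 (n+1) (m+1) = s1 n m - (n : ℚ) * s1 n (m+1) from rfl,
        ih m h1, ih (m+1) (Nat.lt_succ_of_lt h1)]
      ring

lemma inversion (n : ℕ) : ∀ j, ∑ l ∈ range (n + 1), s1 n l * S2 l j
    = if j = n then 1 else 0 := by
  induction n with
  | zero =>
    intro j
    rw [Finset.sum_range_one]
    match j with
    | 0 => rw [show S2 0 0 = 1 from rfl, show s1 0 0 = 1 from rfl]; norm_num
    | j + 1 =>
      rw [show S2 0 (j+1) = 0 from rfl, show s1 0 0 = 1 from rfl,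
        if_neg (Nat.succ_ne_zero j)]; ring
  | succ n ih =>
    intro j
    have key : ∑ l ∈ range (n + 2), s1 (n+1) l * S2 l j
        = (∑ l ∈ range (n + 1), s1 n l * S2 (l+1) j)
          - (n : ℚ) * ∑ l ∈ range (n + 1), s1 n l * S2 l j := by
      rw [Finset.sum_range_succ' _ (n+1)]
      have : ∀ l ∈ range (n + 1), s1 (n+1) (l+1) * S2 (l+1) j
          = s1 n l * S2 (l+1) j - (n : ℚ) * (s1 n (l+1) * S2 (l+1) j) := by
        intro l _
        rw [show s1 (n+1) (l+1) = s1 n l - (n : ℚ) * s1 n (l+1) from rfl]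
        ring
      rw [Finset.sum_congr rfl this, Finset.sum_sub_distrib, ← Finset.mul_sum]
      have h2 : ∑ l ∈ range (n + 1), s1 n (l+1) * S2 (l+1) j
          = ∑ l ∈ range (n + 1), s1 n l * S2 l j - s1 n 0 * S2 0 j := by
        rw [Finset.sum_range_succ' (fun l => s1 n l * S2 l j) n]
        have : s1 n (n+1) = 0 := s1_zero n (n+1) (Nat.lt_succ_self n)
        rw [Finset.sum_range_succ, this]
        ring
      rw [h2, show s1 (n+1) 0 = -(n : ℚ) * s1 n 0 from rfl]
      ring
    rw [key]
    match j with
    | 0 =>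
      have : ∀ l ∈ range (n + 1), s1 n l * S2 (l+1) 0 = 0 := by
        intro l _; rw [show S2 (l+1) 0 = 0 from rfl]; ring
      rw [Finset.sum_congr rfl this, Finset.sum_const_zero, ih 0]
      rw [if_neg (by omega : (0:ℕ) ≠ n + 1)]
      by_cases h : 0 = n
      · rw [if_pos h, ← h]; norm_num
      · rw [if_neg h]; ring
    | m + 1 =>
      have : ∀ l ∈ range (n + 1), s1 n l * S2 (l+1) (m+1)
          = s1 n l * S2 l m + ((m : ℚ) + 1) * (s1 n l * S2 l (m+1)) := by
        intro l _
        rw [show S2 (l+1) (m+1) = S2 l m + ((m : ℚ)+1) * S2 l (m+1) from rfl]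
        ring
      rw [Finset.sum_congr rfl this, Finset.sum_add_distrib, ← Finset.mul_sum,
        ih m, ih (m+1)]
      by_cases h1 : m = n
      · subst h1
        simp [Nat.succ_ne_self]
      · by_cases h2 : m + 1 = n
        · have h3 : m + 1 ≠ n + 1 := by omega
          simp only [if_pos h2, if_neg h1, if_neg h3]
          push_cast [← h2]
          ring
        · have h3 : m + 1 ≠ n + 1 := by omega
          simp [h1, h2, h3]

theorem changhee_eq_stirling_euler (n k : ℕ) (hk : 1 ≤ k) :
    Ch k n = ∑ l ∈ range (n + 1), s1 n l * E k l := by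
  set c : ℕ → ℚ := fun j => (-1/2 : ℚ)^j * ((k + j - 1).choose j) * (j.factorial : ℚ) with hc
  have hE : ∀ l ∈ range (n + 1), s1 n l * E k l
      = ∑ j ∈ range (n + 1), s1 n l * (c j * S2 l j) := by
    intro l hl
    rw [Finset.mem_range] at hl
    have hext : E k l = ∑ j ∈ range (n + 1), c j * S2 l j := by
      rw [E]
      apply Finset.sum_subset
      · intro x hx; rw [Finset.mem_range] at *; omega
      · intro x _ hx
        rw [Finset.mem_range, not_lt] at hx
        rw [S2_zero l x (by omega)]; ring
    rw [hext, Finset.mul_sum]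
  rw [Finset.sum_congr rfl hE, Finset.sum_comm]
  have : ∀ j ∈ range (n + 1), ∑ l ∈ range (n + 1), s1 n l * (c j * S2 l j)
      = c j * (if j = n then 1 else 0) := by
    intro j _
    rw [← inversion n j, Finset.mul_sum]
    apply Finset.sum_congr rfl
    intro l _; ring
  rw [Finset.sum_congr rfl this]
  simp only [mul_ite, mul_one, mul_zero]
  rw [Finset.sum_ite_eq' (range (n+1)) n c, if_pos (Finset.self_mem_range_succ n)]
  simp only [hc, Ch]
  rw [div_pow, neg_pow, one_pow]
  ring
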